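/- Any k×k submatrix G_k formed by selecting k rows of the generator matrix G of an (n,k) BCH-DFT code is invertible. -/

import Mathlib

open Matrix Finset Complex Real

/-- The unitary `l × l` DFT matrix, with entries `(1/√l)·exp(-2πi·r·s/l)`. -/
noncomputable def dftMatrix (l : ℕ) : Matrix (Fin l) (Fin l) ℂ :=
  fun r s => (1 / Real.sqrt l : ℝ) * Complex.exp (-(2 * Real.pi * Complex.I * r.val * s.val) / l)

/-- The `n × k` selection matrix with an `α × α` identity block at the top-left and a
`β × β` identity block at the bottom-right (`α + β = k`), zeros elsewhere. -/
def sigmaMat (n k α : ℕ) : Matrix (Fin n) (Fin k) ℂ :=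
  fun r s => if (s.val < α ∧ r.val = s.val) ∨ (α ≤ s.val ∧ r.val = s.val + (n - k)) then 1 else 0

/-- The generator matrix `G = √(n/k) · Wₙᴴ Σ W_k` of an `(n,k)` BCH-DFT code. -/
noncomputable def genMatrix (n k α : ℕ) : Matrix (Fin n) (Fin k) ℂ :=
  (Real.sqrt ((n : ℝ) / k) : ℂ) • ((dftMatrix n)ᴴ * sigmaMat n k α * dftMatrix k)

/-- The index of the unique nonzero row in column `s` of `sigmaMat n k α`. -/
def selIdx (n k α : ℕ) (hkn : k ≤ n) (s : Fin k) : Fin n :=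
  if s.val < α then ⟨s.val, lt_of_lt_of_le s.isLt hkn⟩
  else ⟨s.val + (n - k), by have := s.isLt; omega⟩

lemma sigmaMat_apply {n k α : ℕ} (hkn : k ≤ n) (r : Fin n) (s : Fin k) :
    sigmaMat n k α r s = if r = selIdx n k α hkn s then 1 else 0 := by
  have h : ((s.val < α ∧ r.val = s.val) ∨ (α ≤ s.val ∧ r.val = s.val + (n - k))) ↔
      r = selIdx n k α hkn s := by
    unfold selIdx
    by_cases h : s.val < α
    · simp [h, Fin.ext_iff]
    · simp [h, Fin.ext_iff]
      omega
  simp only [sigmaMat, h]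

lemma dft_conj_mul_sigma {n k α : ℕ} (hkn : k ≤ n) (r : Fin n) (s : Fin k) :
    ((dftMatrix n)ᴴ * sigmaMat n k α) r s = (dftMatrix n)ᴴ r (selIdx n k α hkn s) := by
  rw [Matrix.mul_apply]
  simp [sigmaMat_apply hkn, mul_ite, mul_one, mul_zero, Finset.sum_ite_eq']

lemma dft_conjT_apply (l : ℕ) (r s : Fin l) :
    (dftMatrix l)ᴴ r s
      = ((1 / Real.sqrt l : ℝ) : ℂ) * Complex.exp ((2 * Real.pi * Complex.I * s.val * r.val) / l) := by
  rw [conjTranspose_apply]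
  simp only [dftMatrix, Complex.star_def, _root_.map_mul, Complex.conj_ofReal]
  rw [← Complex.exp_conj]
  congr 2
  simp only [map_div₀, map_neg, _root_.map_mul, Complex.conj_I, Complex.conj_ofReal,
    map_natCast, map_ofNat]
  ring

/-- Any `k × k` submatrix formed by selecting `k` distinct rows of the generator matrix
of an `(n,k)` BCH-DFT code is invertible. -/
theorem genMatrix_submatrix_invertible {n k α β : ℕ} (hk : 0 < k) (hkn : k < n)
    (hab : α + β = k) (f : Fin k → Fin n) (hf : Function.Injective f) :
    IsUnit ((genMatrix n k α).submatrix f id) := by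
  have hn : 0 < n := hk.trans hkn
  have hkn' : k ≤ n := hkn.le
  haveI : NeZero k := ⟨hk.ne'⟩
  -- the scalar factors are nonzero
  have hcn : ((1 / Real.sqrt n : ℝ) : ℂ) ≠ 0 := by
    rw [Complex.ofReal_ne_zero]
    exact one_div_ne_zero (Real.sqrt_pos.mpr (by exact_mod_cast hn)).ne'
  have hck : ((1 / Real.sqrt k : ℝ) : ℂ) ≠ 0 := by
    rw [Complex.ofReal_ne_zero]
    exact one_div_ne_zero (Real.sqrt_pos.mpr (by exact_mod_cast hk)).ne'
  -- the nodes of the Vandermonde matrix for the row-selected part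
  set u : ℂ := Complex.exp (2 * Real.pi * Complex.I / n) with hu
  have hprim : IsPrimitiveRoot u n := Complex.isPrimitiveRoot_exp n hn.ne'
  set z : Fin k → ℂ := fun r => u ^ (f r).val with hzdef
  have hz0 : ∀ r, z r ≠ 0 := fun r => pow_ne_zero _ (Complex.exp_ne_zero _)
  have hzinj : Function.Injective z := by
    intro r r' h
    exact hf (Fin.val_injective (hprim.pow_inj (f r).isLt (f r').isLt h))
  have hzn : ∀ r, z r ^ n = 1 := by
    intro r
    rw [hzdef]
    simp only
    rw [← pow_mul, mul_comm, pow_mul, hprim.pow_eq_one, one_pow]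
  -- the selected-rows part of `Wₙᴴ Σ`
  set A : Matrix (Fin k) (Fin k) ℂ := ((dftMatrix n)ᴴ * sigmaMat n k α).submatrix f id with hA
  have hAentry : ∀ r s, A r s
      = ((1 / Real.sqrt n : ℝ) : ℂ) * z r ^ (selIdx n k α hkn' s).val := by
    intro r s
    rw [hA, Matrix.submatrix_apply, id_eq, dft_conj_mul_sigma hkn', dft_conjT_apply]
    congr 1
    rw [hzdef]
    simp only
    rw [← pow_mul, ← Complex.exp_nat_mul]
    congr 1
    push_cast
    ring
  -- the column permutation
  open Fin.NatCast in set τ : Equiv.Perm (Fin k) := Equiv.addRight (β : Fin k) with hτ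
  have hτval : ∀ s : Fin k, (τ s).val = (s.val + β) % k := by
    intro s
    simp [hτ, Fin.add_def, Fin.val_natCast, Nat.add_mod_mod]
  -- key factorization : D * A = c • (vandermonde z) with permuted columns
  have key : Matrix.diagonal (fun r => z r ^ β) * A
      = ((((1 / Real.sqrt n : ℝ) : ℂ)) • Matrix.vandermonde z).submatrix id τ := by
    ext r s
    rw [Matrix.diagonal_mul, hAentry, Matrix.submatrix_apply, Matrix.smul_apply, id_eq,
      Matrix.vandermonde_apply]
    rw [smul_eq_mul, mul_left_comm, ← pow_add]
    congr 1
    by_cases hs : s.val < α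
    · have h1 : (selIdx n k α hkn' s).val = s.val := by simp [selIdx, hs]
      have h2 : (τ s).val = s.val + β := by rw [hτval, Nat.mod_eq_of_lt (by omega)]
      rw [h1, h2]
      congr 1
      omega
    · have h1 : (selIdx n k α hkn' s).val = s.val + (n - k) := by simp [selIdx, hs]
      have h2 : (τ s).val = s.val + β - k := by
        rw [hτval, Nat.mod_eq_sub_mod (by omega), Nat.mod_eq_of_lt (by have := s.isLt; omega)]
      rw [h1, h2]
      have h3 : β + (s.val + (n - k)) = (s.val + β - k) + n := by have := s.isLt; omega
      rw [h3, pow_add, hzn, mul_one]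
  -- `det A ≠ 0`
  have hdetvz : (Matrix.vandermonde z).det ≠ 0 := by
    rw [Matrix.det_vandermonde]
    refine Finset.prod_ne_zero_iff.mpr fun i _ => Finset.prod_ne_zero_iff.mpr fun j hj => ?_
    have : i ≠ j := by
      intro h; subst h; simp at hj
    exact sub_ne_zero.mpr fun h => this (hzinj h.symm)
  have hsign : ((Equiv.Perm.sign τ : ℤ) : ℂ) ≠ 0 := by
    rcases Int.units_eq_one_or (Equiv.Perm.sign τ) with h | h <;> simp [h]
  have hdetDA : (Matrix.diagonal (fun r => z r ^ β) * A).det ≠ 0 := by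
    rw [key, Matrix.det_permute', Matrix.det_smul]
    simp only [Fintype.card_fin]
    exact mul_ne_zero hsign (mul_ne_zero (pow_ne_zero _ hcn) hdetvz)
  have hdetA : A.det ≠ 0 := by
    rw [Matrix.det_mul] at hdetDA
    exact right_ne_zero_of_mul hdetDA
  -- `det (dftMatrix k) ≠ 0`
  have hdetW : (dftMatrix k).det ≠ 0 := by
    set v : ℂ := Complex.exp (2 * Real.pi * Complex.I / k) with hv
    have hvprim : IsPrimitiveRoot v⁻¹ k := (Complex.isPrimitiveRoot_exp k hk.ne').inv
    set y : Fin k → ℂ := fun r => v⁻¹ ^ r.val with hy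
    have hyinj : Function.Injective y := by
      intro r r' h
      exact Fin.val_injective (hvprim.pow_inj r.isLt r'.isLt h)
    have hWv : dftMatrix k = ((1 / Real.sqrt k : ℝ) : ℂ) • Matrix.vandermonde y := by
      ext r s
      rw [Matrix.smul_apply, Matrix.vandermonde_apply, dftMatrix, smul_eq_mul]
      congr 1
      rw [hy]
      simp only
      rw [hv, ← Complex.exp_neg, ← pow_mul, ← Complex.exp_nat_mul]
      congr 1
      push_cast
      ring
    rw [hWv, Matrix.det_smul]
    simp only [Fintype.card_fin]
    refine mul_ne_zero (pow_ne_zero _ hck) ?_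
    rw [Matrix.det_vandermonde]
    refine Finset.prod_ne_zero_iff.mpr fun i _ => Finset.prod_ne_zero_iff.mpr fun j hj => ?_
    have : i ≠ j := by
      intro h; subst h; simp at hj
    exact sub_ne_zero.mpr fun h => this (hyinj h.symm)
  -- assemble
  have hfac : (genMatrix n k α).submatrix f id
      = (Real.sqrt ((n : ℝ) / k) : ℂ) • (A * dftMatrix k) := by
    have h4 := Matrix.submatrix_mul_equiv ((dftMatrix n)ᴴ * sigmaMat n k α) (dftMatrix k) f
      (Equiv.refl (Fin k)) id
    simp only [Equiv.coe_refl, Matrix.submatrix_id_id] at h4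
    rw [genMatrix]
    simp only [Matrix.submatrix_smul, Pi.smul_apply]
    rw [← h4, hA]
  have hc0 : ((Real.sqrt ((n : ℝ) / k) : ℝ) : ℂ) ≠ 0 := by
    have : (0 : ℝ) < Real.sqrt ((n : ℝ) / k) := Real.sqrt_pos.mpr (by positivity)
    exact_mod_cast this.ne'
  rw [Matrix.isUnit_iff_isUnit_det, isUnit_iff_ne_zero, hfac, Matrix.det_smul, Matrix.det_mul]
  simp only [Fintype.card_fin]
  exact mul_ne_zero (pow_ne_zero _ hc0) (mul_ne_zero hdetA hdetW)
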